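/- The fixed points of the Q-learning dynamics coincide with Quantal Response Equilibria: an interior point p ∈ Δ satisfies, for all k and i, r_{ki}(p_{-k}) − ⟨p_k, r_k(p)⟩ + T_k Σ_j p_{kj} ln(p_{kj}/p_{ki}) = 0 if and only if p_{ki} = exp(r_{ki}(p_{-k})/T_k)/Σ_j exp(r_{kj}(p_{-k})/T_k) for all k, i. -/

import Mathlib

lemma qld_aux {n : ℕ} (r : Fin n → ℝ) (T : ℝ) (hT : 0 < T)
    (p : Fin n → ℝ) (hp : ∀ i, 0 < p i) (hs : ∑ i, p i = 1) :
    (∀ i, r i - (∑ j, p j * r j) + T * ∑ j, p j * Real.log (p j / p i) = 0) ↔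
    (∀ i, p i = Real.exp (r i / T) / ∑ j, Real.exp (r j / T)) := by
  have hn : (Finset.univ : Finset (Fin n)).Nonempty := by
    by_contra hne
    rw [Finset.not_nonempty_iff_eq_empty] at hne
    rw [hne, Finset.sum_empty] at hs
    norm_num at hs
  have hS : 0 < ∑ j, Real.exp (r j / T) :=
    Finset.sum_pos (fun j _ => Real.exp_pos _) hn
  have hsum : ∀ i, ∑ j, p j * Real.log (p j / p i)
      = (∑ j, p j * Real.log (p j)) - Real.log (p i) := by
    intro i
    have h1 : ∀ j : Fin n, p j * Real.log (p j / p i)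
        = p j * Real.log (p j) - p j * Real.log (p i) := by
      intro j; rw [Real.log_div (hp j).ne' (hp i).ne']; ring
    simp_rw [h1]
    rw [Finset.sum_sub_distrib, ← Finset.sum_mul, hs, one_mul]
  constructor
  · intro h i
    set A := ∑ j, p j * r j with hA
    set E := ∑ j, p j * Real.log (p j) with hE
    have hlog : ∀ i, Real.log (p i) = r i / T + (T * E - A) / T := by
      intro i
      have hi := h i
      rw [hsum i, mul_sub] at hi
      field_simp
      linarith
    have hpe : ∀ i, p i = Real.exp (r i / T) * Real.exp ((T * E - A) / T) := by
      intro i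
      rw [← Real.exp_add, ← hlog i, Real.exp_log (hp i)]
    have h1 : (∑ j, Real.exp (r j / T)) * Real.exp ((T * E - A) / T) = 1 := by
      rw [Finset.sum_mul, ← hs]
      exact Finset.sum_congr rfl fun j _ => (hpe j).symm
    have h2 : Real.exp ((T * E - A) / T) = 1 / ∑ j, Real.exp (r j / T) := by
      rw [eq_div_iff hS.ne', mul_comm]; exact h1
    rw [hpe i, h2, mul_one_div]
  · intro h i
    have hlogp : ∀ j, Real.log (p j)
        = r j / T - Real.log (∑ j, Real.exp (r j / T)) := by
      intro j
      rw [h j, Real.log_div (Real.exp_pos _).ne' hS.ne', Real.log_exp]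
    have hEx : ∑ j, p j * Real.log (p j)
        = (∑ j, p j * r j) / T - Real.log (∑ j, Real.exp (r j / T)) := by
      simp_rw [hlogp, mul_sub]
      rw [Finset.sum_sub_distrib, ← Finset.sum_mul, hs, one_mul]
      congr 1
      rw [Finset.sum_div]
      exact Finset.sum_congr rfl fun j _ => (mul_div_assoc _ _ _).symm
    rw [hsum i, hEx, hlogp i]
    field_simp
    ring

/-- The interior fixed points of the Q-learning dynamics coincide with Quantal Response
Equilibria: the vector field vanishes at `p` iff `p` has the Boltzmann/softmax form. -/
theorem qld_fixed_point_iff_qre {N : ℕ} {n : Fin N → ℕ}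
    (r : ∀ k : Fin N, Fin (n k) → ℝ)   -- rewards `r_k(p_{-k})` at the point `p`
    (T : Fin N → ℝ) (hT : ∀ k, 0 < T k)
    (p : ∀ k, Fin (n k) → ℝ)
    (hpPos : ∀ k i, 0 < p k i) (hps : ∀ k, ∑ i, p k i = 1) :
    (∀ (k : Fin N) (i : Fin (n k)),
        r k i - (∑ j, p k j * r k j) +
          T k * ∑ j, p k j * Real.log (p k j / p k i) = 0) ↔
      (∀ (k : Fin N) (i : Fin (n k)),
        p k i = Real.exp (r k i / T k) / ∑ j, Real.exp (r k j / T k)) := by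
  constructor
  · intro h k
    exact (qld_aux (r k) (T k) (hT k) (p k) (hpPos k) (hps k)).mp (h k)
  · intro h k
    exact (qld_aux (r k) (T k) (hT k) (p k) (hpPos k) (hps k)).mpr (h k)
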